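/- Let n ≥ 3, -2 < l < 0, p > 1, and let f : (0,∞) → R be continuous, positive, with f(s) ≤ C₂ s^l for s ≥ 1 and ∫_0^1 s f(s) ds ≤ C₃ < ∞. Suppose u : [0,∞) → R is continuous, satisfies 0 < u(s) ≤ α for all s ≥ 0, and satisfies the integral equation u(r) = α − (1/(n−2))∫_0^r {1 − (s/r)^{n−2}} s f(s) u(s)^p ds. If r_α ≥ 1 is such that u(r_α) = α/2, then ((n−2)/2)·α^{1−p} ≤ C₃ + (C₂/(2+l))·r_α^{2+l}. -/

import Mathlib

open Real intervalIntegral MeasureTheory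

theorem stmt_4 (n l p α C₂ C₃ rα : ℝ) (hn : 3 ≤ n) (hl : -2 < l) (hl' : l < 0)
    (hp : 1 < p) (hα : 0 < α)
    (f u : ℝ → ℝ)
    (hfc : ContinuousOn f (Set.Ioi 0)) (hfpos : ∀ s, 0 < s → 0 < f s)
    (hfl : ∀ s, 1 ≤ s → f s ≤ C₂ * s ^ l)
    (hfi : (∫ s in (0 : ℝ)..1, s * f s) ≤ C₃)
    (huc : Continuous u) (hub : ∀ s : ℝ, 0 ≤ s → 0 < u s ∧ u s ≤ α)
    (hie : ∀ r : ℝ, 0 < r →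
      u r = α - (1 / (n - 2)) * ∫ s in (0 : ℝ)..r, (1 - (s / r) ^ (n - 2)) * s * f s * u s ^ p)
    (hrα : 1 ≤ rα) (hhalf : u rα = α / 2) :
    (n - 2) / 2 * α ^ (1 - p) ≤ C₃ + C₂ / (2 + l) * rα ^ (2 + l) := by
  have hn2 : (1:ℝ) ≤ n - 2 := by linarith
  have hrα0 : (0:ℝ) < rα := by linarith
  have hl2 : (0:ℝ) < 2 + l := by linarith
  have hC₂ : 0 < C₂ := by
    have h1 := hfl 1 le_rfl
    rw [Real.one_rpow, mul_one] at h1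
    exact (hfpos 1 one_pos).trans_le h1
  set g : ℝ → ℝ := fun s => (1 - (s / rα) ^ (n - 2)) * s * f s * u s ^ p with hg_def
  -- value of the integral
  have hIeq : (∫ s in (0:ℝ)..rα, g s) = (n - 2) * α / 2 := by
    have h := hie rα hrα0
    rw [hhalf] at h
    have hne : n - 2 ≠ 0 := by linarith
    have h' : (1 / (n - 2)) * (∫ s in (0:ℝ)..rα, g s) = α / 2 := by simp only [hg_def]; linarith
    rw [one_div, inv_mul_eq_iff_eq_mul₀ hne] at h'
    linarith
  have hIpos : (0:ℝ) < (n - 2) * α / 2 := by nlinarith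
  have hg_int : IntervalIntegrable g volume 0 rα := by
    by_contra h
    rw [intervalIntegral.integral_undef h] at hIeq
    linarith
  -- min of u on [0, rα]
  obtain ⟨x₀, hx₀, hmin⟩ := isCompact_Icc.exists_isMinOn
    (Set.nonempty_Icc.mpr hrα0.le) (huc.continuousOn (s := Set.Icc 0 rα))
  set m := u x₀ with hm_def
  have hm_pos : 0 < m := (hub x₀ hx₀.1).1
  have hm_le : ∀ s ∈ Set.Icc (0:ℝ) rα, m ≤ u s := fun s hs => hmin hs
  have hK : 0 < m ^ p := Real.rpow_pos_of_pos hm_pos p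
  have hcsf : ContinuousOn (fun s => s * f s) (Set.Ioi (0:ℝ)) :=
    continuousOn_id.mul hfc
  -- integrability of s * f s on [0, rα/2] by domination
  have h_int_half : IntervalIntegrable (fun s => s * f s) volume 0 (rα/2) := by
    have hg' : IntervalIntegrable g volume 0 (rα/2) :=
      hg_int.mono_set (by
        rw [Set.uIcc_of_le (by linarith : (0:ℝ) ≤ rα/2), Set.uIcc_of_le hrα0.le]
        exact Set.Icc_subset_Icc le_rfl (by linarith))
    have hdom : IntervalIntegrable (fun s => (2 / m ^ p) * g s) volume 0 (rα/2) :=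
      hg'.const_mul _
    apply hdom.mono_fun
    · apply ContinuousOn.aestronglyMeasurable
      · apply hcsf.mono
        rw [Set.uIoc_of_le (by linarith : (0:ℝ) ≤ rα/2)]
        exact fun x hx => hx.1
      · rw [Set.uIoc_of_le (by linarith : (0:ℝ) ≤ rα/2)]
        exact measurableSet_Ioc
    · rw [Filter.EventuallyLE, ae_restrict_iff' (by
        rw [Set.uIoc_of_le (by linarith : (0:ℝ) ≤ rα/2)]; exact measurableSet_Ioc)]
      filter_upwards with s hs
      rw [Set.uIoc_of_le (by linarith : (0:ℝ) ≤ rα/2)] at hs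
      obtain ⟨hs0, hs2⟩ := hs
      have hsrα : s ≤ rα := by linarith
      have hfs : 0 < f s := hfpos s hs0
      have hw : (s / rα) ^ (n - 2) ≤ 1/2 := by
        have h1 : s / rα ≤ 1/2 := by
          rw [div_le_iff₀ hrα0]; linarith
        have h2 : (s / rα) ^ (n - 2) ≤ (1/2 : ℝ) ^ (n - 2) :=
          Real.rpow_le_rpow (by positivity) h1 (by linarith)
        have h3 : ((1:ℝ)/2) ^ (n - 2) ≤ (1/2 : ℝ) ^ (1:ℝ) :=
          Real.rpow_le_rpow_of_exponent_ge (by norm_num) (by norm_num) hn2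
        rw [Real.rpow_one] at h3
        linarith
      have hup : m ^ p ≤ u s ^ p :=
        Real.rpow_le_rpow hm_pos.le (hm_le s ⟨hs0.le, hsrα⟩) (by linarith)
      have hgl : (1/2) * (s * f s) * m ^ p ≤ g s := by
        have hA : 0 ≤ s * f s := by positivity
        have hup0 : 0 ≤ u s ^ p := hK.le.trans hup
        simp only [hg_def]
        nlinarith [mul_le_mul_of_nonneg_right hw (mul_nonneg hA hup0),
          mul_le_mul_of_nonneg_left hup hA,
          mul_le_mul_of_nonneg_right
            (mul_le_mul_of_nonneg_left hup (by norm_num : (0:ℝ) ≤ 1/2)) hA]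
      have hsf0 : 0 ≤ s * f s := by positivity
      have hg0 : 0 ≤ g s := by nlinarith
      rw [Real.norm_eq_abs, Real.norm_eq_abs, abs_of_nonneg hsf0,
        abs_of_nonneg (by positivity : (0:ℝ) ≤ 2 / m ^ p * g s)]
      have hmul := mul_le_mul_of_nonneg_left hgl (by positivity : (0:ℝ) ≤ 2 / m ^ p)
      have heq : 2 / m ^ p * (1/2 * (s * f s) * m ^ p) = s * f s := by
        field_simp
      linarith
  -- integrability of s*f s on [0,b] for 0 ≤ b ≤ rα
  have hsf_int : ∀ b : ℝ, 0 ≤ b → b ≤ rα → IntervalIntegrable (fun s => s * f s) volume 0 b := by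
    intro b hb0 hbr
    rcases le_or_gt b (rα/2) with hb | hb
    · exact h_int_half.mono_set (by
        rw [Set.uIcc_of_le hb0, Set.uIcc_of_le (by linarith : (0:ℝ) ≤ rα/2)]
        exact Set.Icc_subset_Icc le_rfl hb)
    · refine h_int_half.trans ?_
      apply ContinuousOn.intervalIntegrable
      apply hcsf.mono
      rw [Set.uIcc_of_le hb.le]
      exact fun x hx => lt_of_lt_of_le (by linarith) hx.1
  have h_int1 : IntervalIntegrable (fun s => s * f s) volume 0 1 := hsf_int 1 zero_le_one hrα
  have h_intr : IntervalIntegrable (fun s => s * f s) volume 0 rα := hsf_int rα hrα0.le le_rfl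
  have h_int1r : IntervalIntegrable (fun s => s * f s) volume 1 rα := by
    apply ContinuousOn.intervalIntegrable
    apply hcsf.mono
    rw [Set.uIcc_of_le hrα]
    exact fun x hx => lt_of_lt_of_le one_pos hx.1
  -- compare ∫ g with α^p * ∫ s f s
  have hαp : 0 < α ^ p := Real.rpow_pos_of_pos hα p
  have hcomp1 : (∫ s in (0:ℝ)..rα, g s) ≤ ∫ s in (0:ℝ)..rα, α ^ p * (s * f s) := by
    apply intervalIntegral.integral_mono_on hrα0.le hg_int (h_intr.const_mul _)
    intro s hs
    rcases eq_or_lt_of_le hs.1 with h0 | h0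
    · simp [hg_def, ← h0]
    · have hfs : 0 < f s := hfpos s h0
      have hu := hub s h0.le
      have hup : u s ^ p ≤ α ^ p := Real.rpow_le_rpow (hu.1).le hu.2 (by linarith)
      have hup0 : 0 ≤ u s ^ p := (Real.rpow_pos_of_pos hu.1 p).le
      have hw0 : (s / rα) ^ (n - 2) ≤ 1 :=
        Real.rpow_le_one (by positivity) ((div_le_one hrα0).mpr hs.2) (by linarith)
      have hw1 : 0 ≤ (s / rα) ^ (n - 2) := Real.rpow_nonneg (by positivity) _
      have hA : 0 ≤ s * f s := by positivity
      simp only [hg_def]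
      nlinarith [mul_le_mul_of_nonneg_left hup hA, mul_nonneg (mul_nonneg hA hup0) hw1]
  have hsplit : (∫ s in (0:ℝ)..rα, s * f s)
      = (∫ s in (0:ℝ)..1, s * f s) + ∫ s in (1:ℝ)..rα, s * f s :=
    (intervalIntegral.integral_add_adjacent_intervals h_int1 h_int1r).symm
  -- bound the tail integral
  have hcomp2 : (∫ s in (1:ℝ)..rα, s * f s) ≤ ∫ s in (1:ℝ)..rα, C₂ * s ^ (1 + l) := by
    apply intervalIntegral.integral_mono_on hrα h_int1r
    · apply ContinuousOn.intervalIntegrable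
      apply ContinuousOn.mul continuousOn_const
      apply ContinuousOn.rpow_const continuousOn_id
      intro x hx
      rw [Set.uIcc_of_le hrα] at hx
      exact Or.inl (by dsimp; linarith [hx.1])
    · intro s hs
      have hs1 : (1:ℝ) ≤ s := hs.1
      have hs0 : (0:ℝ) < s := lt_of_lt_of_le one_pos hs1
      have : s ^ (1 + l) = s * s ^ l := by
        rw [Real.rpow_add hs0, Real.rpow_one]
      rw [this]
      have := hfl s hs1
      calc s * f s ≤ s * (C₂ * s ^ l) := by
            exact mul_le_mul_of_nonneg_left this hs0.le
        _ = C₂ * (s * s ^ l) := by ring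
  have hval : (∫ s in (1:ℝ)..rα, C₂ * s ^ (1 + l)) = C₂ * ((rα ^ (2 + l) - 1) / (2 + l)) := by
    rw [intervalIntegral.integral_const_mul, integral_rpow (Or.inl (by linarith))]
    have h21 : 1 + l + 1 = 2 + l := by ring
    rw [h21, Real.one_rpow]
  -- put it all together
  have htail : (∫ s in (1:ℝ)..rα, s * f s) ≤ C₂ / (2 + l) * rα ^ (2 + l) := by
    have hr2 : 0 < rα ^ (2 + l) := Real.rpow_pos_of_pos hrα0 _
    have : C₂ * ((rα ^ (2 + l) - 1) / (2 + l)) ≤ C₂ / (2 + l) * rα ^ (2 + l) := by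
      have h1 : C₂ * ((rα ^ (2 + l) - 1) / (2 + l))
          = C₂ / (2 + l) * rα ^ (2 + l) - C₂ / (2 + l) := by
        field_simp
      have h2 : 0 ≤ C₂ / (2 + l) := by positivity
      linarith
    linarith [hcomp2, hval]
  have hmain : (n - 2) * α / 2 ≤ α ^ p * (C₃ + C₂ / (2 + l) * rα ^ (2 + l)) := by
    rw [← hIeq]
    calc (∫ s in (0:ℝ)..rα, g s) ≤ ∫ s in (0:ℝ)..rα, α ^ p * (s * f s) := hcomp1
      _ = α ^ p * ∫ s in (0:ℝ)..rα, s * f s := by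
          rw [intervalIntegral.integral_const_mul]
      _ ≤ α ^ p * (C₃ + C₂ / (2 + l) * rα ^ (2 + l)) := by
          apply mul_le_mul_of_nonneg_left _ hαp.le
          rw [hsplit]
          linarith
  -- divide by α^p
  have hkey : α ^ (1 - p) = α / α ^ p := by
    rw [Real.rpow_sub hα, Real.rpow_one]
  calc (n - 2) / 2 * α ^ (1 - p) = ((n - 2) * α / 2) / α ^ p := by rw [hkey]; ring
    _ ≤ (α ^ p * (C₃ + C₂ / (2 + l) * rα ^ (2 + l))) / α ^ p := by
        exact (div_le_div_iff_of_pos_right hαp).mpr hmain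
    _ = C₃ + C₂ / (2 + l) * rα ^ (2 + l) := mul_div_cancel_left₀ _ hαp.ne'
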